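/- Permuted-Born counterexample: for a permutation sigma of {1,...,d} with sigma(i0) != i0 for some i0, the readout R([psi])_i = |<e_{sigma(i)}, psi>| is round-metric non-expanding with respect to Fubini–Study distance (indeed satisfies the same distance inequality as Born), but fails calibration: R([e_{i0}]) != e_{i0}. -/

import Mathlib

open Finset

noncomputable def dround {d : ℕ} (u v : Fin d → ℝ) : ℝ :=
  Real.arccos (∑ i, u i * v i)

noncomputable def dFS {d : ℕ} (ψ φ : EuclideanSpace ℂ (Fin d)) : ℝ :=
  Real.arccos ‖(inner ℂ φ ψ : ℂ)‖

def stdVec {d : ℕ} (i : Fin d) : Fin d → ℝ := fun j => if j = i then 1 else 0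

/-- The permuted Born readout in the basis `b`. -/
noncomputable def RPerm {d : ℕ}
    (b : OrthonormalBasis (Fin d) ℂ (EuclideanSpace ℂ (Fin d)))
    (σ : Equiv.Perm (Fin d)) (ψ : EuclideanSpace ℂ (Fin d)) : Fin d → ℝ :=
  fun i => ‖(inner ℂ (b (σ i)) ψ : ℂ)‖

theorem permuted_born_counterexample {d : ℕ}
    (b : OrthonormalBasis (Fin d) ℂ (EuclideanSpace ℂ (Fin d)))
    (σ : Equiv.Perm (Fin d)) (i0 : Fin d) (hσ : σ i0 ≠ i0) :
    (∀ ψ φ : EuclideanSpace ℂ (Fin d), ‖ψ‖ = 1 → ‖φ‖ = 1 →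
      dround (RPerm b σ ψ) (RPerm b σ φ) ≤ dFS ψ φ) ∧
    RPerm b σ (b i0) ≠ stdVec i0 := by
  constructor
  · intro ψ φ hψ hφ
    unfold dround dFS RPerm
    rw [Real.arccos, Real.arccos]
    have mono := Real.monotone_arcsin
    refine sub_le_sub_left (mono ?_) _
    have key : (inner ℂ φ ψ : ℂ) = ∑ i, inner ℂ φ (b (σ i)) * inner ℂ (b (σ i)) ψ := by
      rw [Equiv.sum_comp σ (fun j => (inner ℂ φ (b j) * inner ℂ (b j) ψ : ℂ))]
      exact (b.sum_inner_mul_inner φ ψ).symm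
    calc ‖(inner ℂ φ ψ : ℂ)‖ = ‖∑ i, (inner ℂ φ (b (σ i)) * inner ℂ (b (σ i)) ψ : ℂ)‖ := by
          rw [key]
      _ ≤ ∑ i, ‖(inner ℂ φ (b (σ i)) * inner ℂ (b (σ i)) ψ : ℂ)‖ := norm_sum_le _ _
      _ = ∑ i, ‖(inner ℂ (b (σ i)) ψ : ℂ)‖ * ‖(inner ℂ (b (σ i)) φ : ℂ)‖ := by
          refine Finset.sum_congr rfl fun i _ => ?_
          rw [norm_mul, ← inner_conj_symm (b (σ i)) φ, RCLike.norm_conj, mul_comm]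
  · intro h
    have h1 : RPerm b σ (b i0) i0 = stdVec i0 i0 := by rw [h]
    have h2 : (inner ℂ (b (σ i0)) (b i0) : ℂ) = 0 :=
      b.orthonormal.2 hσ
    simp [RPerm, stdVec, h2] at h1
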